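/- arXiv:2204.03563 — 3 statements merged into one kernel-verified Lean document; each statement's English description precedes it below -/
import Mathlib

section
/- Fix an ordinal α, and for ordinals δ ≥ 1, β > 1 let log_β δ denote the unique ordinal γ with β^γ ≤ δ < β^(γ+1). Then for any ordinals β, γ ≥ 1: β·ℵ_α ≤ γ if and only if log_{ℵ_α} β < log_{ℵ_α} γ, where in addition ¬(β ∼_α γ) ∧ β < γ is equivalent to β·ℵ_α ≤ γ. -/
open Ordinal Cardinal

private lemma aleph_mul_lt {α : Ordinal} {a b : Ordinal}
    (ha : a < (Cardinal.aleph α).ord) (hb : b < (Cardinal.aleph α).ord) :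
    a * b < (Cardinal.aleph α).ord := by
  rw [Cardinal.lt_ord] at *
  rw [Ordinal.card_mul]
  exact Cardinal.mul_lt_of_lt (Cardinal.aleph0_le_aleph α) ha hb

theorem class_lt_iff_log_lt (α β γ lb lg : Ordinal) (hβ : 1 ≤ β) (hγ : 1 ≤ γ)
    (hlb1 : (Cardinal.aleph α).ord ^ lb ≤ β) (hlb2 : β < (Cardinal.aleph α).ord ^ (lb + 1))
    (hlg1 : (Cardinal.aleph α).ord ^ lg ≤ γ) (hlg2 : γ < (Cardinal.aleph α).ord ^ (lg + 1)) :
    (β * (Cardinal.aleph α).ord ≤ γ ↔ lb < lg) ∧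
    ((¬(β < γ * (Cardinal.aleph α).ord ∧ γ < β * (Cardinal.aleph α).ord) ∧ β < γ) ↔
      β * (Cardinal.aleph α).ord ≤ γ) := by
  set A := (Cardinal.aleph α).ord with hA
  have hω : ω ≤ A := by
    rw [hA, ← Cardinal.ord_aleph0]
    exact Cardinal.ord_le_ord.2 (Cardinal.aleph0_le_aleph α)
  have h1A : 1 < A := lt_of_lt_of_le Ordinal.one_lt_omega0 hω
  have h0A : (0 : Ordinal) < A := zero_lt_one.trans h1A
  have hAlim : Order.IsSuccLimit A := Cardinal.isSuccLimit_ord (Cardinal.aleph0_le_aleph α)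
  have hβ0 : (0 : Ordinal) < β := zero_lt_one.trans_le hβ
  have main : β * A ≤ γ ↔ lb < lg := by
    constructor
    · intro h
      have h2 : A ^ (lb + 1) ≤ γ := by
        rw [opow_add, opow_one]
        exact le_trans (mul_le_mul_left hlb1 A) h
      have h3 : A ^ (lb + 1) < A ^ (lg + 1) := lt_of_le_of_lt h2 hlg2
      have := (Ordinal.opow_lt_opow_iff_right h1A).1 h3
      exact (Order.succ_lt_succ_iff.1 this)
    · intro h
      have hle : A ^ (lb + 1) ≤ A ^ lg :=
        Ordinal.opow_le_opow_right h0A (Order.succ_le_of_lt h)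
      -- show β * A ≤ A ^ (lb + 1)
      have key : β * A ≤ A ^ (lb + 1) := by
        rw [mul_le_iff_of_isSuccLimit hAlim]
        intro x hx
        have hq : β / A ^ lb < A := by
          rw [Ordinal.div_lt (Ordinal.opow_ne_zero lb h0A.ne')]
          have e : A ^ (lb + 1) = A ^ lb * A := by rw [opow_add, opow_one]
          rwa [e] at hlb2
        set q := β / A ^ lb with hqdef
        have hβle : β ≤ A ^ lb * (q + 1) := by
          rw [mul_add_one]
          calc β = A ^ lb * q + β % A ^ lb := (Ordinal.div_add_mod β (A ^ lb)).symm
            _ ≤ A ^ lb * q + A ^ lb := add_le_add_right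
                (Ordinal.mod_lt β (Ordinal.opow_ne_zero lb h0A.ne')).le _
        have hqx : (q + 1) * x < A := by
          rcases eq_or_ne x 0 with rfl | hx0
          · simpa using h0A
          · exact aleph_mul_lt (hAlim.succ_lt hq) hx
        calc β * x ≤ A ^ lb * (q + 1) * x := mul_le_mul_left hβle x
          _ = A ^ lb * ((q + 1) * x) := by rw [mul_assoc]
          _ ≤ A ^ lb * A := mul_le_mul_right hqx.le _
          _ = A ^ (lb + 1) := by rw [opow_add, opow_one]
      exact key.trans (hle.trans hlg1)
  refine ⟨main, ?_⟩
  constructor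
  · rintro ⟨hn, hlt⟩
    by_contra hcon
    push_neg at hcon
    exact hn ⟨hlt.trans_le (Ordinal.le_mul_left γ h0A), hcon⟩
  · intro h
    have hlt : β < β * A := by
      conv_lhs => rw [← mul_one β]
      exact mul_lt_mul_of_pos_left h1A hβ0
    exact ⟨fun hc => absurd hc.2 (not_lt.2 h), hlt.trans_le h⟩
end

section
/- Fix an ordinal α. For any ordinals β, γ ≥ 1, the following are equivalent: (1) ¬(β ∼_α γ) and β < γ; (2) β·ℵ_α ≤ γ; where β ∼_α γ means β < γ·ℵ_α and γ < β·ℵ_α. -/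
theorem class_lt_iff_mul_le (α β γ : Ordinal) (hβ : 1 ≤ β) (hγ : 1 ≤ γ) :
    ((¬(β < γ * (Cardinal.aleph α).ord ∧ γ < β * (Cardinal.aleph α).ord) ∧ β < γ) ↔
      β * (Cardinal.aleph α).ord ≤ γ) := by
  set o := (Cardinal.aleph α).ord with ho
  have hω : Ordinal.omega0 ≤ o := by
    rw [ho, ← Cardinal.ord_aleph0]
    exact Cardinal.ord_le_ord.2 (Cardinal.aleph0_le_aleph α)
  have h1o : 1 < o := lt_of_lt_of_le Ordinal.one_lt_omega0 hω
  constructor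
  · rintro ⟨hn, hlt⟩
    have hA : β < γ * o := hlt.trans_le (Ordinal.le_mul_left γ (lt_trans one_pos h1o))
    exact not_lt.1 fun hB => hn ⟨hA, hB⟩
  · intro h
    refine ⟨fun ⟨_, h2⟩ => absurd h (not_le.2 h2), ?_⟩
    calc β = β * 1 := (mul_one β).symm
      _ < β * o := mul_lt_mul_of_pos_left h1o (lt_of_lt_of_le one_pos hβ)
      _ ≤ γ := h
end

section
/- Let ℵ_α be an infinite regular cardinal, β an ordinal with β ≤ ℵ_α, and f : β → (ℵ_α + 1) a function (so f(γ) ≤ ℵ_α for all γ < β). Then the transfinite ordinal sum Σ f equals ℵ_α² (ordinal square) if and only if the set {γ < β : f(γ) = ℵ_α} has cardinality ℵ_α. -/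
open Ordinal Cardinal

noncomputable def transSum (f : Ordinal → Ordinal) (β : Ordinal) : Ordinal :=
  Ordinal.limitRecOn β 0 (fun γ ih => ih + f γ) (fun γ _ ih => Ordinal.bsup γ (fun δ h => ih δ h))

theorem transSum_zero (f : Ordinal → Ordinal) : transSum f 0 = 0 :=
  Ordinal.limitRecOn_zero _ _ _

theorem transSum_succ (f : Ordinal → Ordinal) (γ : Ordinal) :
    transSum f (Order.succ γ) = transSum f γ + f γ :=
  Ordinal.limitRecOn_succ _ _ _ _

theorem transSum_limit (f : Ordinal → Ordinal) {β : Ordinal} (h : Order.IsSuccLimit β) :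
    transSum f β = Ordinal.bsup β (fun δ _ => transSum f δ) :=
  Ordinal.limitRecOn_limit _ _ _ _ h

theorem transSum_mono (f : Ordinal → Ordinal) :
    ∀ {β γ : Ordinal}, γ ≤ β → transSum f γ ≤ transSum f β := by
  intro β
  induction β using Ordinal.limitRecOn with
  | zero => intro γ h; rw [nonpos_iff_eq_zero.1 h]
  | add_one β ih =>
      rw [Ordinal.add_one_eq_succ]
      intro γ h
      rcases h.lt_or_eq with h' | rfl
      · rw [transSum_succ]
        exact (ih (Order.lt_succ_iff.1 h')).trans (le_self_add)
      · exact le_rfl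
  | limit β hβ ih =>
      intro γ h
      rcases h.lt_or_eq with h' | rfl
      · rw [transSum_limit f hβ]
        exact Ordinal.le_bsup (fun δ _ => transSum f δ) γ h'
      · exact le_rfl

theorem transSum_le_transSum {f g : Ordinal → Ordinal} :
    ∀ {β : Ordinal}, (∀ γ < β, f γ ≤ g γ) → transSum f β ≤ transSum g β := by
  intro β
  induction β using Ordinal.limitRecOn with
  | zero => intro _; rw [transSum_zero, transSum_zero]
  | add_one β ih =>
      rw [Ordinal.add_one_eq_succ]
      intro h
      rw [transSum_succ, transSum_succ]
      exact add_le_add (ih fun γ hγ => h γ (hγ.trans (Order.lt_succ β))) (h β (Order.lt_succ β))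
  | limit β hβ ih =>
      intro h
      rw [transSum_limit f hβ, transSum_limit g hβ]
      exact Ordinal.bsup_le fun γ hγ => (ih γ hγ fun δ hδ => h δ (hδ.trans hγ)).trans
        (Ordinal.le_bsup _ γ hγ)

theorem transSum_const (c : Ordinal) : ∀ β : Ordinal, transSum (fun _ => c) β = c * β := by
  intro β
  induction β using Ordinal.limitRecOn with
  | zero => rw [transSum_zero, mul_zero]
  | add_one β ih => rw [Ordinal.add_one_eq_succ, transSum_succ, ih, Ordinal.mul_succ]
  | limit β hβ ih =>
      rw [transSum_limit _ hβ]
      apply le_antisymm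
      · exact Ordinal.bsup_le fun γ hγ => by
          rw [ih γ hγ]; exact mul_le_mul_right hγ.le c
      · exact (Ordinal.mul_le_iff_of_isSuccLimit hβ).2 fun γ hγ => by
          rw [← ih γ hγ]; exact Ordinal.le_bsup _ γ hγ

theorem transSum_eq_sq_iff (α β : Ordinal.{0}) (hreg : (Cardinal.aleph α).IsRegular)
    (hβ : β ≤ (Cardinal.aleph α).ord) (f : Ordinal.{0} → Ordinal.{0})
    (hf : ∀ γ < β, f γ ≤ (Cardinal.aleph α).ord) :
    transSum f β = (Cardinal.aleph α).ord * (Cardinal.aleph α).ord ↔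
      Cardinal.mk {γ : Ordinal.{0} // γ < β ∧ f γ = (Cardinal.aleph α).ord} =
        Cardinal.lift.{1} (Cardinal.aleph α) := by
  set K := Cardinal.aleph α with hK
  set O := K.ord with hO
  have hK0 : ℵ₀ ≤ K := hreg.aleph0_le
  have Olim : Order.IsSuccLimit O := Cardinal.isSuccLimit_ord hK0
  have hcof : O.cof = K := hreg.cof_eq
  have hupper : transSum f β ≤ O * O := by
    calc transSum f β ≤ transSum (fun _ => O) β := transSum_le_transSum hf
      _ = O * β := transSum_const O β
      _ ≤ O * O := mul_le_mul_right hβ O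
  constructor
  · -- forward direction
    intro hsum
    have hle : #{γ : Ordinal // γ < β ∧ f γ = O} ≤ Cardinal.lift.{1} K := by
      have h1 : #{γ : Ordinal // γ < β ∧ f γ = O} ≤ #{γ : Ordinal // γ < β} :=
        Cardinal.mk_le_of_injective (f := fun x => ⟨x.1, x.2.1⟩)
          (fun x y h => by
            have h' := congrArg Subtype.val h
            exact Subtype.ext h')
      have h2 : #{γ : Ordinal // γ < β} = Cardinal.lift.{1} β.card := Ordinal.mk_Iio_ordinal β
      have h3 : β.card ≤ K := by
        have := Ordinal.card_le_card hβ
        rwa [Cardinal.card_ord] at this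
      exact h1.trans (h2.le.trans (Cardinal.lift_le.2 h3))
    by_contra hne
    have hlt : #{γ : Ordinal // γ < β ∧ f γ = O} < Cardinal.lift.{1} K := hle.lt_of_ne hne
    rcases hβ.lt_or_eq with hβlt | hβeq
    · have hlt2 : transSum f β < O * O :=
        lt_of_le_of_lt (by
          calc transSum f β ≤ transSum (fun _ => O) β := transSum_le_transSum hf
            _ = O * β := transSum_const O β)
          (mul_lt_mul_of_pos_left hβlt Olim.pos)
      exact absurd hsum hlt2.ne
    · subst hβeq
      letI : IsWellOrder O.ToType (· < ·) := isWellOrder_lt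
      set tin : O.ToType → Ordinal := fun x => Ordinal.typein (α := O.ToType) (· < ·) x with htin
      have tin_lt : ∀ x, tin x < O := fun x => Ordinal.typein_lt_self x
      have tin_inj : Function.Injective tin := fun a b h => Ordinal.typein_injective _ h
      have tin_surj : ∀ s, s < O → ∃ x, tin x = s := by
        intro s hs
        have hsT : s < Ordinal.type (α := O.ToType) (· < ·) := by rwa [Ordinal.type_toType]
        exact ⟨Ordinal.enum (· < ·) ⟨s, hsT⟩, Ordinal.typein_enum _ _⟩
      have hS' : #{x : O.ToType // f (tin x) = O} < K := by
        have e : {x : O.ToType // f (tin x) = O} ↪ {γ : Ordinal // γ < O ∧ f γ = O} :=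
          ⟨fun x => ⟨tin x.1, tin_lt x.1, x.2⟩, fun x y h => by
            have h' := congrArg Subtype.val h
            exact Subtype.ext (tin_inj h')⟩
        have h4 : Cardinal.lift.{1} #{x : O.ToType // f (tin x) = O} ≤
            #{γ : Ordinal // γ < O ∧ f γ = O} := by
          have h5 := Cardinal.lift_mk_le'.2 ⟨e⟩
          simpa using h5
        exact Cardinal.lift_lt.1 (h4.trans_lt hlt)
      set b := Ordinal.lsub (fun x : {x : O.ToType // f (tin x) = O} => tin x.1) with hb
      have hbO : b < O := by
        apply Ordinal.lsub_lt_ord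
        · rw [hcof]; exact hS'
        · exact fun x => tin_lt x.1
      have hSb : ∀ s, s < O → f s = O → s < b := by
        intro s hs hfs
        obtain ⟨x, hx⟩ := tin_surj s hs
        have hxS : f (tin x) = O := by rw [hx]; exact hfs
        have h6 := Ordinal.lt_lsub (fun x : {x : O.ToType // f (tin x) = O} => tin x.1) ⟨x, hxS⟩
        rwa [hx] at h6
      have claim : ∀ γ, γ < O → ∃ t, t < O ∧ transSum f γ ≤ O * b + t := by
        have main : ∀ γ, (∀ δ, δ < γ → (δ < O → ∃ t, t < O ∧ transSum f δ ≤ O * b + t)) →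
            (γ < O → ∃ t, t < O ∧ transSum f γ ≤ O * b + t) := by
          intro γ IH hγ
          rcases Ordinal.zero_or_succ_or_isSuccLimit γ with rfl | ⟨δ, rfl⟩ | hlim
          · exact ⟨0, Olim.pos, by rw [transSum_zero]; exact zero_le⟩
          · have hδ : δ < O := (Order.lt_succ δ).trans hγ
            by_cases hfd : f δ = O
            · have hδb : δ < b := hSb δ hδ hfd
              refine ⟨0, Olim.pos, ?_⟩
              rw [add_zero]
              calc transSum f (Order.succ δ) ≤ transSum f b :=
                    transSum_mono f (Order.succ_le_of_lt hδb)
                _ ≤ transSum (fun _ => O) b :=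
                    transSum_le_transSum (fun γ' hγ' => hf γ' (hγ'.trans hbO))
                _ = O * b := transSum_const O b
            · have hfd' : f δ < O := (hf δ hδ).lt_of_ne hfd
              obtain ⟨t, htO, ht⟩ := IH δ (Order.lt_succ δ) hδ
              refine ⟨t + f δ, ?_, ?_⟩
              · rw [Cardinal.lt_ord, Ordinal.card_add]
                exact Cardinal.add_lt_of_lt hK0 (Cardinal.lt_ord.1 htO) (Cardinal.lt_ord.1 hfd')
              · rw [transSum_succ, ← add_assoc]
                exact add_le_add_left ht (f δ)
          · choose t htO ht using fun δ (h : δ < γ) => IH δ h (h.trans hγ)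
            refine ⟨Ordinal.bsup γ t, ?_, ?_⟩
            · exact Ordinal.bsup_lt_ord (by rw [hcof]; exact Cardinal.lt_ord.1 hγ) htO
            · rw [transSum_limit f hlim]
              exact Ordinal.bsup_le fun δ h =>
                (ht δ h).trans (add_le_add_right (Ordinal.le_bsup t δ h) _)
        exact fun γ => Ordinal.induction γ main
      have hfinal : transSum f O ≤ O * (b + 1) := by
        rw [transSum_limit f Olim]
        apply Ordinal.bsup_le
        intro γ hγ
        obtain ⟨t, htO, ht⟩ := claim γ hγ
        calc transSum f γ ≤ O * b + t := ht
          _ ≤ O * b + O := add_le_add_right htO.le _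
          _ = O * (b + 1) := by rw [Ordinal.add_one_eq_succ, Ordinal.mul_succ]
      have hb1 : b + 1 < O := by rw [Ordinal.add_one_eq_succ]; exact Olim.succ_lt hbO
      rw [hsum] at hfinal
      exact (hfinal.trans_lt (mul_lt_mul_of_pos_left hb1 Olim.pos)).false
  · -- backward direction
    intro hmk
    have hcard : K ≤ β.card := by
      have h1 : #{γ : Ordinal // γ < β ∧ f γ = O} ≤ #{γ : Ordinal // γ < β} :=
        Cardinal.mk_le_of_injective (f := fun x => ⟨x.1, x.2.1⟩)
          (fun x y h => by
            have h' := congrArg Subtype.val h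
            exact Subtype.ext h')
      have h2 : #{γ : Ordinal // γ < β} = Cardinal.lift.{1} β.card := Ordinal.mk_Iio_ordinal β
      rw [hmk, h2] at h1
      exact Cardinal.lift_le.1 h1
    have hβO : β = O := le_antisymm hβ (Cardinal.ord_le.2 hcard)
    subst hβO
    have hub : ∀ b, b < O → ∃ s, s < O ∧ f s = O ∧ b ≤ s := by
      intro b hb
      by_contra hcon
      push_neg at hcon
      have h1 : #{γ : Ordinal // γ < O ∧ f γ = O} ≤ #{γ : Ordinal // γ < b} :=
        Cardinal.mk_le_of_injective (f := fun x => ⟨x.1, hcon x.1 x.2.1 x.2.2⟩)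
          (fun x y h => by
            have h' := congrArg Subtype.val h
            exact Subtype.ext h')
      have h2 : #{γ : Ordinal // γ < b} = Cardinal.lift.{1} b.card := Ordinal.mk_Iio_ordinal b
      rw [hmk, h2] at h1
      have h3 : K ≤ b.card := Cardinal.lift_le.1 h1
      exact absurd (Cardinal.lt_ord.1 hb) h3.not_gt
    have claim : ∀ ι, ι < O → ∃ γ, γ < O ∧ O * ι ≤ transSum f γ := by
      have main : ∀ ι, (∀ δ, δ < ι → (δ < O → ∃ γ, γ < O ∧ O * δ ≤ transSum f γ)) →
          (ι < O → ∃ γ, γ < O ∧ O * ι ≤ transSum f γ) := by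
        intro ι IH hι
        choose g hgO hg using fun δ (h : δ < ι) => IH δ h (h.trans hι)
        have hb0 : Ordinal.bsup ι g < O :=
          Ordinal.bsup_lt_ord (by rw [hcof]; exact Cardinal.lt_ord.1 hι) hgO
        obtain ⟨s, hsO, hfs, hbs⟩ := hub _ hb0
        have hts : ∀ δ (h : δ < ι), O * δ ≤ transSum f s := fun δ h =>
          (hg δ h).trans (transSum_mono f ((Ordinal.le_bsup g δ h).trans hbs))
        refine ⟨Order.succ s, Olim.succ_lt hsO, ?_⟩
        rw [transSum_succ, hfs]
        rcases Ordinal.zero_or_succ_or_isSuccLimit ι with rfl | ⟨δ, rfl⟩ | hlim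
        · rw [mul_zero]; exact zero_le
        · rw [Ordinal.mul_succ]
          exact add_le_add_left (hts δ (Order.lt_succ δ)) O
        · refine le_trans ?_ (le_self_add)
          exact (Ordinal.mul_le_iff_of_isSuccLimit hlim).2 fun δ h => hts δ h
      exact fun ι => Ordinal.induction ι main
    have hlower : O * O ≤ transSum f O := by
      refine (Ordinal.mul_le_iff_of_isSuccLimit Olim).2 fun ι hι => ?_
      obtain ⟨γ, hγ, h⟩ := claim ι hι
      exact h.trans (transSum_mono f hγ.le)
    exact le_antisymm hupper hlower
end
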